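/- Let f : (0,∞) → C be continuous with asymptotic expansion f(t) ~ Σ_{j≥0} A_{−l+j} t^{−l+j} as t → 0+ (l ∈ {0, 1/2}) and exponential decay at ∞. Then ζ(s) = −(1/Γ(s)) ∫_0^∞ t^{s−1} f(t) dt extends meromorphically with s = 0 regular, and ζ'(0) = −∫_0^1 (f(t) − A_{−l} t^{−l}) dt/t − ∫_1^∞ f(t) dt/t + C', where C' = A_0 Γ'(1) if l = 0 (interpreting A_{−l} t^{−l} = A_0 and the subtraction accordingly), and C' = 2 A_{−1/2} if l = 1/2. -/

import Mathlib

open MeasureTheory Asymptotics Filter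

open MeasureTheory Asymptotics Filter Set Complex

namespace MellinZeta17

noncomputable section

variable (f : ℝ → ℂ) (l : ℝ) (A : ℕ → ℂ)

/-- The truncated function. -/
def FF (J : ℕ) : ℝ → ℂ := fun t =>
  f t - (Set.Ioc (0:ℝ) 1).indicator
    (fun t => ∑ j ∈ Finset.range J, A j * ((t ^ (-l + j) : ℝ) : ℂ)) t

def JJ (s : ℂ) : ℕ := (⌈l - s.re⌉).toNat + 1

def Z (J : ℕ) (s : ℂ) : ℂ :=
  -((Complex.Gamma s)⁻¹ *
    (mellin (FF f l A J) s + ∑ j ∈ Finset.range J, A j * (s - (l:ℂ) + (j:ℂ))⁻¹))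

def zeta (s : ℂ) : ℂ := if l = 0 ∧ s = 0 then -A 0 else Z f l A (JJ l s) s

lemma lt_JJ (s : ℂ) : l - (JJ l s : ℝ) < s.re := by
  have h1 : l - s.re ≤ (⌈l - s.re⌉ : ℝ) := Int.le_ceil _
  have h2 : (⌈l - s.re⌉ : ℝ) ≤ ((⌈l - s.re⌉.toNat : ℤ) : ℝ) := by
    exact_mod_cast Int.cast_le.mpr (Int.self_le_toNat _)
  have : ((⌈l - s.re⌉.toNat : ℤ) : ℝ) < (JJ l s : ℝ) := by
    unfold JJ; push_cast; linarith
  linarith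

lemma JJ_le {s : ℂ} {c : ℝ} (h : l - s.re ≤ c) : JJ l s ≤ ⌈c⌉.toNat + 1 := by
  unfold JJ
  have := Int.ceil_le_ceil (R := ℝ) h
  omega

lemma sum_continuousOn (J : ℕ) :
    ContinuousOn (fun t : ℝ => ∑ j ∈ Finset.range J, A j * ((t ^ (-l + j) : ℝ) : ℂ)) (Ioi 0) := by
  apply continuousOn_finset_sum
  intro j _
  apply continuousOn_const.mul
  exact Complex.continuous_ofReal.comp_continuousOn
    (continuousOn_id.rpow_const (fun x hx => Or.inl (ne_of_gt hx)))

lemma locInt (hcont : ContinuousOn f (Set.Ioi 0)) (J : ℕ) :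
    LocallyIntegrableOn (FF f l A J) (Ioi 0) volume := by
  have h1 : LocallyIntegrableOn f (Ioi 0) volume := hcont.locallyIntegrableOn measurableSet_Ioi
  have h2 : LocallyIntegrableOn ((Set.Ioc (0:ℝ) 1).indicator
      (fun t => ∑ j ∈ Finset.range J, A j * ((t ^ (-l + j) : ℝ) : ℂ))) (Ioi 0) volume := by
    intro x hx
    obtain ⟨U, hU, hint⟩ := (sum_continuousOn l A J).locallyIntegrableOn (μ := volume) measurableSet_Ioi x hx
    exact ⟨U, hU, hint.indicator measurableSet_Ioc⟩
  exact h1.sub h2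


lemma FF_bot
    (hasym : ∀ J : ℕ,
      (fun t : ℝ => f t - ∑ j ∈ Finset.range J, A j * ((t ^ (-l + j) : ℝ) : ℂ))
        =O[nhdsWithin 0 (Set.Ioi 0)] fun t : ℝ => t ^ (-l + J)) (J : ℕ) :
    FF f l A J =O[nhdsWithin 0 (Set.Ioi 0)] (· ^ (-(l - (J:ℝ)))) := by
  have hev : FF f l A J =ᶠ[nhdsWithin 0 (Set.Ioi 0)]
      (fun t : ℝ => f t - ∑ j ∈ Finset.range J, A j * ((t ^ (-l + j) : ℝ) : ℂ)) := by
    filter_upwards [Ioc_mem_nhdsGT_of_mem (by norm_num : (0:ℝ) ∈ Ico (0:ℝ) 1)] with t ht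
    unfold FF
    rw [Set.indicator_of_mem ht]
  have h2 : (fun t : ℝ => t ^ (-l + (J:ℝ))) = (· ^ (-(l - (J:ℝ)))) := by
    have : -l + (J:ℝ) = -(l - (J:ℝ)) := by ring
    rw [this]
  exact (hev.trans_isBigO (h2 ▸ hasym J))

lemma FF_top {C a : ℝ} (hC : ∀ t : ℝ, 1 ≤ t → ‖f t‖ ≤ C * Real.exp (-a * t)) (J : ℕ) :
    FF f l A J =O[atTop] fun t => Real.exp (-a * t) := by
  rw [Asymptotics.isBigO_iff]
  refine ⟨C, ?_⟩
  filter_upwards [eventually_gt_atTop (1:ℝ)] with t ht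
  have h1 : FF f l A J t = f t := by
    unfold FF
    rw [Set.indicator_of_notMem (fun h => absurd h.2 (not_le.mpr ht)), sub_zero]
  rw [h1, Real.norm_eq_abs, abs_of_pos (Real.exp_pos _)]
  exact hC t ht.le

variable {f l A} in
lemma mellin_conv (hcont : ContinuousOn f (Set.Ioi 0)) {C a : ℝ} (ha : 0 < a)
    (hC : ∀ t : ℝ, 1 ≤ t → ‖f t‖ ≤ C * Real.exp (-a * t))
    (hasym : ∀ J : ℕ,
      (fun t : ℝ => f t - ∑ j ∈ Finset.range J, A j * ((t ^ (-l + j) : ℝ) : ℂ))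
        =O[nhdsWithin 0 (Set.Ioi 0)] fun t : ℝ => t ^ (-l + J))
    (J : ℕ) {s : ℂ} (hs : l - (J:ℝ) < s.re) :
    MellinConvergent (FF f l A J) s :=
  mellinConvergent_of_isBigO_rpow_exp ha (locInt f l A hcont J) (FF_top f l A hC J)
    (FF_bot f l A hasym J) hs

variable {f l A} in
lemma mellin_diff (hcont : ContinuousOn f (Set.Ioi 0)) {C a : ℝ} (ha : 0 < a)
    (hC : ∀ t : ℝ, 1 ≤ t → ‖f t‖ ≤ C * Real.exp (-a * t))
    (hasym : ∀ J : ℕ,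
      (fun t : ℝ => f t - ∑ j ∈ Finset.range J, A j * ((t ^ (-l + j) : ℝ) : ℂ))
        =O[nhdsWithin 0 (Set.Ioi 0)] fun t : ℝ => t ^ (-l + J))
    (J : ℕ) {s : ℂ} (hs : l - (J:ℝ) < s.re) :
    DifferentiableAt ℂ (mellin (FF f l A J)) s :=
  mellin_differentiableAt_of_isBigO_rpow_exp ha (locInt f l A hcont J) (FF_top f l A hC J)
    (FF_bot f l A hasym J) hs

lemma FF_succ (J : ℕ) : FF f l A (J+1) = fun t => FF f l A J t -
    A J * (Set.Ioc (0:ℝ) 1).indicator (fun t => (t:ℂ) ^ ((-l + (J:ℝ) : ℝ) : ℂ)) t := by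
  funext t
  unfold FF
  by_cases ht : t ∈ Set.Ioc (0:ℝ) 1
  · rw [Set.indicator_of_mem ht, Set.indicator_of_mem ht, Set.indicator_of_mem ht,
      Finset.sum_range_succ, Complex.ofReal_cpow ht.1.le]
    push_cast
    ring
  · rw [Set.indicator_of_notMem ht, Set.indicator_of_notMem ht, Set.indicator_of_notMem ht]
    ring


variable {f l A} in
lemma step (hcont : ContinuousOn f (Set.Ioi 0)) {C a : ℝ} (ha : 0 < a)
    (hC : ∀ t : ℝ, 1 ≤ t → ‖f t‖ ≤ C * Real.exp (-a * t))
    (hasym : ∀ J : ℕ,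
      (fun t : ℝ => f t - ∑ j ∈ Finset.range J, A j * ((t ^ (-l + j) : ℝ) : ℂ))
        =O[nhdsWithin 0 (Set.Ioi 0)] fun t : ℝ => t ^ (-l + J))
    (J : ℕ) {s : ℂ} (hs : l - (J:ℝ) < s.re) :
    mellin (FF f l A (J+1)) s = mellin (FF f l A J) s - A J * (s - (l:ℂ) + (J:ℂ))⁻¹ := by
  have hind : HasMellin ((Set.Ioc (0:ℝ) 1).indicator
      (fun t => (t:ℂ) ^ ((-l + (J:ℝ) : ℝ) : ℂ))) s (1 / (s + ((-l + (J:ℝ) : ℝ) : ℂ))) := by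
    apply hasMellin_cpow_Ioc
    rw [Complex.ofReal_re]
    linarith
  have hconvA : MellinConvergent (fun t => A J • (Set.Ioc (0:ℝ) 1).indicator
      (fun t => (t:ℂ) ^ ((-l + (J:ℝ) : ℝ) : ℂ)) t) s := hind.1.const_smul (A J)
  have hsub := hasMellin_sub (mellin_conv hcont ha hC hasym J hs) hconvA
  have heq : (fun t => FF f l A J t - A J • (Set.Ioc (0:ℝ) 1).indicator
      (fun t => (t:ℂ) ^ ((-l + (J:ℝ) : ℝ) : ℂ)) t) = FF f l A (J+1) := by
    rw [FF_succ]
    simp_rw [smul_eq_mul]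
  rw [heq] at hsub
  rw [hsub.2, mellin_const_smul, hind.2]
  have : s + ((-l + (J:ℝ) : ℝ) : ℂ) = s - (l:ℂ) + (J:ℂ) := by
    push_cast; ring
  rw [this, smul_eq_mul, one_div]

variable {f l A} in
lemma chain (hcont : ContinuousOn f (Set.Ioi 0)) {C a : ℝ} (ha : 0 < a)
    (hC : ∀ t : ℝ, 1 ≤ t → ‖f t‖ ≤ C * Real.exp (-a * t))
    (hasym : ∀ J : ℕ,
      (fun t : ℝ => f t - ∑ j ∈ Finset.range J, A j * ((t ^ (-l + j) : ℝ) : ℂ))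
        =O[nhdsWithin 0 (Set.Ioi 0)] fun t : ℝ => t ^ (-l + J))
    (J K : ℕ) {s : ℂ} (hs : l - (J:ℝ) < s.re) :
    mellin (FF f l A (J+K)) s = mellin (FF f l A J) s
      - ∑ j ∈ Finset.Ico J (J+K), A j * (s - (l:ℂ) + (j:ℂ))⁻¹ := by
  induction K with
  | zero => simp
  | succ K ih =>
    have h1 : l - ((J+K : ℕ):ℝ) < s.re := by
      push_cast
      have : ((0:ℝ)) ≤ (K:ℝ) := Nat.cast_nonneg K
      linarith
    have h2 := step hcont ha hC hasym (J+K) h1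
    rw [show J + (K+1) = (J+K)+1 from rfl, h2, ih,
      Finset.sum_Ico_succ_top (Nat.le_add_right J K)]
    push_cast
    ring

variable {f l A} in
lemma Z_agree (hcont : ContinuousOn f (Set.Ioi 0)) {C a : ℝ} (ha : 0 < a)
    (hC : ∀ t : ℝ, 1 ≤ t → ‖f t‖ ≤ C * Real.exp (-a * t))
    (hasym : ∀ J : ℕ,
      (fun t : ℝ => f t - ∑ j ∈ Finset.range J, A j * ((t ^ (-l + j) : ℝ) : ℂ))
        =O[nhdsWithin 0 (Set.Ioi 0)] fun t : ℝ => t ^ (-l + J))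
    {J J' : ℕ} (hJ : J ≤ J') {s : ℂ} (hs : l - (J:ℝ) < s.re) :
    Z f l A J' s = Z f l A J s := by
  obtain ⟨K, rfl⟩ := Nat.exists_eq_add_of_le hJ
  unfold Z
  rw [chain hcont ha hC hasym J K hs, Finset.range_eq_Ico,
    ← Finset.sum_Ico_consecutive _ (Nat.zero_le J) (Nat.le_add_right J K),
    ← Finset.range_eq_Ico]
  ring


lemma mero_sum {x : ℂ} {F : Finset ℕ} {g : ℕ → ℂ → ℂ}
    (h : ∀ i ∈ F, MeromorphicAt (g i) x) :
    MeromorphicAt (fun s => ∑ i ∈ F, g i s) x := by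
  classical
  induction F using Finset.induction_on with
  | empty => simpa using MeromorphicAt.const 0 x
  | insert a F' hni ih =>
    simp_rw [Finset.sum_insert hni]
    exact (h a (Finset.mem_insert_self a F')).add
      (ih fun i hi => h i (Finset.mem_insert_of_mem hi))

variable {f l A} in
lemma Z_mero (hcont : ContinuousOn f (Set.Ioi 0)) {C a : ℝ} (ha : 0 < a)
    (hC : ∀ t : ℝ, 1 ≤ t → ‖f t‖ ≤ C * Real.exp (-a * t))
    (hasym : ∀ J : ℕ,
      (fun t : ℝ => f t - ∑ j ∈ Finset.range J, A j * ((t ^ (-l + j) : ℝ) : ℂ))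
        =O[nhdsWithin 0 (Set.Ioi 0)] fun t : ℝ => t ^ (-l + J))
    (M : ℕ) {s₀ : ℂ} (hM : l - (M:ℝ) < s₀.re) :
    MeromorphicAt (Z f l A M) s₀ := by
  have h1 : AnalyticAt ℂ (fun s => (Complex.Gamma s)⁻¹) s₀ :=
    Complex.differentiable_one_div_Gamma.analyticAt s₀
  have h2 : AnalyticAt ℂ (mellin (FF f l A M)) s₀ := by
    refine DifferentiableOn.analyticAt (s := {s : ℂ | l - (M:ℝ) < s.re})
      (fun s hs => (mellin_diff hcont ha hC hasym M hs).differentiableWithinAt) ?_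
    exact (isOpen_lt continuous_const Complex.continuous_re).mem_nhds hM
  have h3 : MeromorphicAt (fun s : ℂ => ∑ j ∈ Finset.range M,
      A j * (s - (l:ℂ) + (j:ℂ))⁻¹) s₀ := by
    refine mero_sum (fun j _ => ?_)
    exact analyticAt_const.meromorphicAt.mul
      (((analyticAt_id.sub analyticAt_const).add analyticAt_const).meromorphicAt.inv)
  exact ((h1.meromorphicAt.mul (h2.meromorphicAt.add h3)).neg :)

variable {f l A} in
lemma zeta_mero (hcont : ContinuousOn f (Set.Ioi 0)) {C a : ℝ} (ha : 0 < a)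
    (hC : ∀ t : ℝ, 1 ≤ t → ‖f t‖ ≤ C * Real.exp (-a * t))
    (hasym : ∀ J : ℕ,
      (fun t : ℝ => f t - ∑ j ∈ Finset.range J, A j * ((t ^ (-l + j) : ℝ) : ℂ))
        =O[nhdsWithin 0 (Set.Ioi 0)] fun t : ℝ => t ^ (-l + J))
    (s₀ : ℂ) : MeromorphicAt (zeta f l A) s₀ := by
  set M := JJ l s₀ + 1 with hMdef
  have hM : l - (M:ℝ) < s₀.re := by
    have := lt_JJ l s₀
    have h0 : (JJ l s₀ : ℝ) ≤ (M:ℝ) := by rw [hMdef]; push_cast; linarith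
    linarith
  have hev : zeta f l A =ᶠ[nhdsWithin s₀ {s₀}ᶜ] Z f l A M := by
    have hne : ∀ᶠ s in nhdsWithin s₀ {s₀}ᶜ, s ≠ 0 := by
      rcases eq_or_ne s₀ 0 with rfl | h
      · filter_upwards [self_mem_nhdsWithin] with s hs using hs
      · exact (eventually_ne_nhds h).filter_mono nhdsWithin_le_nhds
    have hre : ∀ᶠ s in nhdsWithin s₀ {s₀}ᶜ, s₀.re - 1 < s.re := by
      refine Filter.Eventually.filter_mono nhdsWithin_le_nhds ?_
      refine (isOpen_lt continuous_const Complex.continuous_re).eventually_mem ?_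
      show s₀.re - 1 < s₀.re
      linarith
    filter_upwards [hne, hre] with s hs1 hs2
    have hJle : JJ l s ≤ M := by
      have h1 : l - s.re ≤ l - s₀.re + 1 := by linarith
      have h2 := JJ_le l (s := s) h1
      have h3 : ⌈l - s₀.re + 1⌉ = ⌈l - s₀.re⌉ + 1 := by
        exact_mod_cast Int.ceil_add_one (l - s₀.re)
      rw [h3] at h2
      have hM2 : M = ⌈l - s₀.re⌉.toNat + 2 := by rw [hMdef]; unfold JJ; ring
      unfold JJ at h2 ⊢
      omega
    unfold zeta
    rw [if_neg (by rintro ⟨-, rfl⟩; exact hs1 rfl)]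
    exact (Z_agree hcont ha hC hasym hJle (lt_JJ l s)).symm
  exact (Z_mero hcont ha hC hasym M hM).congr hev.symm


lemma FF_zero : FF f l A 0 = f := by
  funext t
  simp [FF]

variable {f l A} in
lemma zeta_formula (hcont : ContinuousOn f (Set.Ioi 0)) {C a : ℝ} (ha : 0 < a)
    (hC : ∀ t : ℝ, 1 ≤ t → ‖f t‖ ≤ C * Real.exp (-a * t))
    (hasym : ∀ J : ℕ,
      (fun t : ℝ => f t - ∑ j ∈ Finset.range J, A j * ((t ^ (-l + j) : ℝ) : ℂ))
        =O[nhdsWithin 0 (Set.Ioi 0)] fun t : ℝ => t ^ (-l + J))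
    (hl0 : 0 ≤ l) {s : ℂ} (hs : l < s.re) :
    zeta f l A s = -((Complex.Gamma s)⁻¹ * ∫ t in Set.Ioi (0:ℝ), (t:ℂ) ^ (s-1) * f t) := by
  have hs0 : ¬(l = 0 ∧ s = 0) := by
    rintro ⟨rfl, rfl⟩
    simp at hs
  unfold zeta
  rw [if_neg hs0]
  have h0 : l - ((0:ℕ):ℝ) < s.re := by push_cast; linarith
  rw [Z_agree hcont ha hC hasym (Nat.zero_le _) h0]
  unfold Z
  rw [FF_zero]
  simp [mellin, smul_eq_mul]

variable {f l A} in
lemma mellin_FF2_zero (hcont : ContinuousOn f (Set.Ioi 0)) {C a : ℝ} (ha : 0 < a)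
    (hC : ∀ t : ℝ, 1 ≤ t → ‖f t‖ ≤ C * Real.exp (-a * t))
    (hasym : ∀ J : ℕ,
      (fun t : ℝ => f t - ∑ j ∈ Finset.range J, A j * ((t ^ (-l + j) : ℝ) : ℂ))
        =O[nhdsWithin 0 (Set.Ioi 0)] fun t : ℝ => t ^ (-l + J))
    (hl1 : l < 1) :
    mellin (FF f l A 2) 0 =
      ((∫ t in Set.Ioc (0:ℝ) 1, (f t - A 0 * ((t ^ (-l) : ℝ) : ℂ)) / (t:ℂ))
        + ∫ t in Set.Ioi (1:ℝ), f t / (t:ℂ)) - A 1 * ((1:ℂ) - (l:ℂ))⁻¹ := by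
  have hs1 : l - ((1:ℕ):ℝ) < (0:ℂ).re := by
    rw [Complex.zero_re]; push_cast; linarith
  have h2 := chain hcont ha hC hasym 1 1 hs1
  have hconv : MellinConvergent (FF f l A 1) 0 := mellin_conv hcont ha hC hasym 1 hs1
  have hsplit : mellin (FF f l A 1) 0
      = (∫ t in Set.Ioc (0:ℝ) 1, ((t:ℂ) ^ ((0:ℂ)-1) • FF f l A 1 t))
        + ∫ t in Set.Ioi (1:ℝ), ((t:ℂ) ^ ((0:ℂ)-1) • FF f l A 1 t) := by
    rw [mellin, ← Ioc_union_Ioi_eq_Ioi (zero_le_one' ℝ)]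
    exact setIntegral_union (Set.Ioc_disjoint_Ioi le_rfl) measurableSet_Ioi
      (hconv.mono_set Set.Ioc_subset_Ioi_self) (hconv.mono_set (Set.Ioi_subset_Ioi zero_le_one))
  have hpow : ∀ t : ℝ, 0 < t → (t:ℂ) ^ ((0:ℂ)-1) = ((t:ℂ))⁻¹ := by
    intro t ht
    rw [zero_sub, Complex.cpow_neg, Complex.cpow_one]
  have piece1 : (∫ t in Set.Ioc (0:ℝ) 1, ((t:ℂ) ^ ((0:ℂ)-1) • FF f l A 1 t))
      = ∫ t in Set.Ioc (0:ℝ) 1, (f t - A 0 * ((t ^ (-l) : ℝ) : ℂ)) / (t:ℂ) := by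
    refine setIntegral_congr_fun measurableSet_Ioc (fun t ht => ?_)
    rw [hpow t ht.1]
    unfold FF
    rw [Set.indicator_of_mem ht, Finset.sum_range_one]
    rw [smul_eq_mul, inv_mul_eq_div]
    norm_num
  have piece2 : (∫ t in Set.Ioi (1:ℝ), ((t:ℂ) ^ ((0:ℂ)-1) • FF f l A 1 t))
      = ∫ t in Set.Ioi (1:ℝ), f t / (t:ℂ) := by
    refine setIntegral_congr_fun measurableSet_Ioi (fun t ht => ?_)
    rw [hpow t (lt_trans zero_lt_one ht)]
    unfold FF
    rw [Set.indicator_of_notMem (fun hmem => absurd hmem.2 (not_le.mpr ht)), sub_zero,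
      smul_eq_mul, inv_mul_eq_div]
  have hIco : Finset.Ico 1 2 = {1} := rfl
  rw [show (1:ℕ)+1 = 2 from rfl] at h2
  rw [h2, hsplit, piece1, piece2, hIco, Finset.sum_singleton]
  have hc : ((0:ℂ) - (l:ℂ) + ((1:ℕ):ℂ)) = 1 - (l:ℂ) := by push_cast; ring
  rw [hc]


variable {f l A} in
lemma mellin_analyticAt (hcont : ContinuousOn f (Set.Ioi 0)) {C a : ℝ} (ha : 0 < a)
    (hC : ∀ t : ℝ, 1 ≤ t → ‖f t‖ ≤ C * Real.exp (-a * t))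
    (hasym : ∀ J : ℕ,
      (fun t : ℝ => f t - ∑ j ∈ Finset.range J, A j * ((t ^ (-l + j) : ℝ) : ℂ))
        =O[nhdsWithin 0 (Set.Ioi 0)] fun t : ℝ => t ^ (-l + J))
    (J : ℕ) {s₀ : ℂ} (hs : l - (J:ℝ) < s₀.re) :
    AnalyticAt ℂ (mellin (FF f l A J)) s₀ := by
  refine DifferentiableOn.analyticAt (s := {s : ℂ | l - (J:ℝ) < s.re})
    (fun s hs => (mellin_diff hcont ha hC hasym J hs).differentiableWithinAt) ?_
  exact (isOpen_lt continuous_const Complex.continuous_re).mem_nhds hs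

lemma one_ne_neg_natC : ∀ m : ℕ, (1:ℂ) ≠ -(m:ℂ) := by
  intro m h
  have h2 : (1:ℝ) = -(m:ℝ) := by exact_mod_cast h
  have := Nat.cast_nonneg (α := ℝ) m
  linarith

lemma hasDerivAt_GammaC : HasDerivAt Complex.Gamma (deriv Complex.Gamma 1) 1 :=
  (Complex.differentiableAt_Gamma 1 one_ne_neg_natC).hasDerivAt

lemma derivGamma_real : deriv Complex.Gamma 1 = ((deriv Real.Gamma 1 : ℝ) : ℂ) := by
  have h1 : ∀ m : ℕ, (1:ℝ) ≠ -(m:ℝ) := by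
    intro m h
    have := Nat.cast_nonneg (α := ℝ) m
    linarith
  have hR : HasDerivAt Real.Gamma (deriv Real.Gamma 1) 1 :=
    (Real.differentiableAt_Gamma h1).hasDerivAt
  have h2 : HasDerivAt (fun x : ℝ => Complex.Gamma (x:ℂ)) (deriv Complex.Gamma 1) 1 :=
    hasDerivAt_GammaC.comp_ofReal
  have h3 : HasDerivAt (fun x : ℝ => ((Real.Gamma x : ℝ) : ℂ))
      ((deriv Real.Gamma 1 : ℝ) : ℂ) 1 := hR.ofReal_comp
  have hfun : (fun x : ℝ => Complex.Gamma (x:ℂ)) = fun x : ℝ => ((Real.Gamma x : ℝ) : ℂ) :=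
    funext fun x => Complex.Gamma_ofReal x
  rw [hfun] at h2
  exact h2.unique h3

lemma hasDerivAt_invGamma :
    HasDerivAt (fun s : ℂ => (Complex.Gamma (s+1))⁻¹)
      (-((deriv Real.Gamma 1 : ℝ) : ℂ)) 0 := by
  have h2 : HasDerivAt (fun s : ℂ => Complex.Gamma (s+1)) (deriv Complex.Gamma 1) 0 := by
    have hf : HasDerivAt (fun s : ℂ => s + 1) 1 0 := (hasDerivAt_id (0:ℂ)).add_const 1
    have hg : HasDerivAt Complex.Gamma (deriv Complex.Gamma 1) ((0:ℂ)+1) := by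
      rw [zero_add]; exact hasDerivAt_GammaC
    have := hg.comp (0:ℂ) hf
    exact this.congr_deriv (mul_one _)
  have h3 := h2.inv (by simp [Complex.Gamma_one] : Complex.Gamma ((0:ℂ)+1) ≠ 0)
  exact h3.congr_deriv (by simp [Complex.Gamma_one, derivGamma_real])


variable {f l A} in
lemma zeta_case_zero (hcont : ContinuousOn f (Set.Ioi 0)) {C a : ℝ} (ha : 0 < a)
    (hC : ∀ t : ℝ, 1 ≤ t → ‖f t‖ ≤ C * Real.exp (-a * t))
    (hasym : ∀ J : ℕ,
      (fun t : ℝ => f t - ∑ j ∈ Finset.range J, A j * ((t ^ (-l + j) : ℝ) : ℂ))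
        =O[nhdsWithin 0 (Set.Ioi 0)] fun t : ℝ => t ^ (-l + J))
    (hl : l = 0) :
    AnalyticAt ℂ (zeta f l A) 0 ∧
    deriv (zeta f l A) 0
      = -(∫ t in Set.Ioc (0:ℝ) 1, (f t - A 0 * ((t ^ (-l) : ℝ) : ℂ)) / (t:ℂ))
        - (∫ t in Set.Ioi (1:ℝ), f t / (t:ℂ))
        + A 0 * ((deriv Real.Gamma 1 : ℝ) : ℂ) := by
  subst hl
  set m := mellin (FF f 0 A 2) with hm
  have h02 : (0:ℝ) - ((2:ℕ):ℝ) < (0:ℂ).re := by norm_num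
  have hmA : AnalyticAt ℂ m 0 := mellin_analyticAt hcont ha hC hasym 2 h02
  set N : ℂ → ℂ := fun s =>
    -((Complex.Gamma (s+1))⁻¹ * (s * m s + A 0 + A 1 * (s * (s+1)⁻¹))) with hNdef
  have hev : zeta f 0 A =ᶠ[nhds 0] N := by
    filter_upwards [Metric.ball_mem_nhds (0:ℂ) (by norm_num : (0:ℝ) < 1/4)] with s hs
    rw [Metric.mem_ball, dist_zero_right] at hs
    by_cases h0 : s = 0
    · subst h0
      unfold zeta
      rw [if_pos ⟨rfl, rfl⟩]
      simp [hNdef, Complex.Gamma_one]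
    · have habs := Complex.abs_re_le_norm s
      have hre : -(1/4 : ℝ) < s.re := by
        have := neg_abs_le s.re
        linarith
      have hJ2 : JJ 0 s ≤ 2 := by
        have h2 := JJ_le 0 (s := s) (c := 1) (by linarith)
        simpa using h2
      unfold zeta
      rw [if_neg (by rintro ⟨-, h⟩; exact h0 h)]
      rw [← Z_agree hcont ha hC hasym hJ2 (lt_JJ 0 s)]
      unfold Z
      rw [Complex.one_div_Gamma_eq_self_mul_one_div_Gamma_add_one,
        Finset.sum_range_succ, Finset.sum_range_one]
      have hs1 : s + 1 ≠ 0 := by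
        intro h
        have : s = -1 := by linear_combination h
        rw [this] at hs
        simp at hs
        norm_num at hs
      rw [hNdef]
      push_cast
      have e1 : s - 0 + 0 = s := by ring
      have e2 : s - 0 + 1 = s + 1 := by ring
      rw [e1, e2, ← hm]
      have key : s * (m s + (A 0 * s⁻¹ + A 1 * (s + 1)⁻¹))
          = s * m s + A 0 + A 1 * (s * (s + 1)⁻¹) := by
        field_simp
        ring
      rw [show s * (Complex.Gamma (s+1))⁻¹ * (m s + (A 0 * s⁻¹ + A 1 * (s + 1)⁻¹))
          = (Complex.Gamma (s+1))⁻¹ * (s * (m s + (A 0 * s⁻¹ + A 1 * (s + 1)⁻¹))) from by ring,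
        key]
  have hAn : AnalyticAt ℂ N 0 := by
    have h1 : AnalyticAt ℂ (fun s : ℂ => (Complex.Gamma (s+1))⁻¹) 0 :=
      (Complex.differentiable_one_div_Gamma.comp (differentiable_id.add_const 1)).analyticAt 0
    exact (h1.mul (((analyticAt_id.mul hmA).add analyticAt_const).add
      (analyticAt_const.mul (analyticAt_id.mul
        ((analyticAt_id.add analyticAt_const).inv (by norm_num)))))).neg
  refine ⟨hAn.congr hev.symm, ?_⟩
  rw [hev.deriv_eq]
  have hmd : HasDerivAt m (deriv m 0) 0 :=
    (mellin_diff hcont ha hC hasym 2 h02).hasDerivAt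
  have hsm : HasDerivAt (fun s : ℂ => s * m s) (m 0) 0 := by
    have := (hasDerivAt_id (0:ℂ)).mul hmd
    exact this.congr_deriv (by simp)
  have hinv1 : HasDerivAt (fun s : ℂ => (s+1)⁻¹) (-1) 0 := by
    have h := ((hasDerivAt_id (0:ℂ)).add_const 1).inv (by norm_num)
    exact h.congr_deriv (by simp)
  have hfrac : HasDerivAt (fun s : ℂ => s * (s+1)⁻¹) 1 0 := by
    have := (hasDerivAt_id (0:ℂ)).mul hinv1
    exact this.congr_deriv (by simp)
  have hG : HasDerivAt (fun s : ℂ => s * m s + A 0 + A 1 * (s * (s+1)⁻¹)) (m 0 + A 1) 0 := by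
    have := (hsm.add_const (A 0)).add (hfrac.const_mul (A 1))
    exact this.congr_deriv (by simp)
  have hNde : HasDerivAt N (-(m 0) - A 1 + A 0 * ((deriv Real.Gamma 1 : ℝ) : ℂ)) 0 := by
    have h := (hasDerivAt_invGamma.mul hG).neg
    refine h.congr_deriv ?_
    simp [Complex.Gamma_one]
    ring
  rw [hNde.deriv, hm, mellin_FF2_zero hcont ha hC hasym (by norm_num)]
  push_cast
  ring_nf
  simp only [neg_add_eq_sub]
  ring


variable {f l A} in
lemma zeta_case_half (hcont : ContinuousOn f (Set.Ioi 0)) {C a : ℝ} (ha : 0 < a)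
    (hC : ∀ t : ℝ, 1 ≤ t → ‖f t‖ ≤ C * Real.exp (-a * t))
    (hasym : ∀ J : ℕ,
      (fun t : ℝ => f t - ∑ j ∈ Finset.range J, A j * ((t ^ (-l + j) : ℝ) : ℂ))
        =O[nhdsWithin 0 (Set.Ioi 0)] fun t : ℝ => t ^ (-l + J))
    (hl : l = 1/2) :
    AnalyticAt ℂ (zeta f l A) 0 ∧
    deriv (zeta f l A) 0
      = -(∫ t in Set.Ioc (0:ℝ) 1, (f t - A 0 * ((t ^ (-l) : ℝ) : ℂ)) / (t:ℂ))
        - (∫ t in Set.Ioi (1:ℝ), f t / (t:ℂ))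
        + 2 * A 0 := by
  subst hl
  set m := mellin (FF f (1/2) A 2) with hm
  have h02 : (1/2:ℝ) - ((2:ℕ):ℝ) < (0:ℂ).re := by norm_num
  have hmA : AnalyticAt ℂ m 0 := mellin_analyticAt hcont ha hC hasym 2 h02
  set N : ℂ → ℂ := fun s =>
    -((Complex.Gamma (s+1))⁻¹ *
      (s * m s + A 0 * (s * (s - 1/2)⁻¹) + A 1 * (s * (s + 1/2)⁻¹))) with hNdef
  have hev : zeta f (1/2) A =ᶠ[nhds 0] N := by
    filter_upwards [Metric.ball_mem_nhds (0:ℂ) (by norm_num : (0:ℝ) < 1/4)] with s hs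
    rw [Metric.mem_ball, dist_zero_right] at hs
    by_cases h0 : s = 0
    · subst h0
      unfold zeta
      rw [if_neg (by norm_num)]
      unfold Z
      rw [hNdef]
      simp [Complex.Gamma_zero]
    · have habs := Complex.abs_re_le_norm s
      have hre : -(1/4 : ℝ) < s.re := by
        have := neg_abs_le s.re
        linarith
      have hJ2 : JJ (1/2) s ≤ 2 := by
        have h2 := JJ_le (1/2) (s := s) (c := 1) (by linarith)
        simpa using h2
      unfold zeta
      rw [if_neg (by rintro ⟨h, -⟩; norm_num at h)]
      rw [← Z_agree hcont ha hC hasym hJ2 (lt_JJ (1/2) s)]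
      unfold Z
      rw [Complex.one_div_Gamma_eq_self_mul_one_div_Gamma_add_one,
        Finset.sum_range_succ, Finset.sum_range_one]
      have hsa : s - 1/2 ≠ 0 := by
        intro h
        have : s = 1/2 := by linear_combination h
        rw [this] at hs
        rw [show ((1:ℂ)/2) = Complex.ofReal (1/2) from by push_cast; ring] at hs
        rw [Complex.norm_real] at hs
        norm_num at hs
      have hsb : s + 1/2 ≠ 0 := by
        intro h
        have : s = -(1/2) := by linear_combination h
        rw [this] at hs
        rw [show (-(1/2) : ℂ) = Complex.ofReal (-(1/2)) from by push_cast; ring] at hs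
        rw [Complex.norm_real] at hs
        norm_num at hs
      rw [hNdef]
      push_cast
      have e1 : s - 1/2 + 0 = s - 1/2 := by ring
      have e2 : s - 1/2 + 1 = s + 1/2 := by ring
      rw [e1, e2, ← hm]
      have key : s * (m s + (A 0 * (s - 1/2)⁻¹ + A 1 * (s + 1/2)⁻¹))
          = s * m s + A 0 * (s * (s - 1/2)⁻¹) + A 1 * (s * (s + 1/2)⁻¹) := by
        ring
      rw [show s * (Complex.Gamma (s+1))⁻¹ * (m s + (A 0 * (s - 1/2)⁻¹ + A 1 * (s + 1/2)⁻¹))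
          = (Complex.Gamma (s+1))⁻¹ * (s * (m s + (A 0 * (s - 1/2)⁻¹ + A 1 * (s + 1/2)⁻¹)))
          from by ring, key]
  have hAn : AnalyticAt ℂ N 0 := by
    have h1 : AnalyticAt ℂ (fun s : ℂ => (Complex.Gamma (s+1))⁻¹) 0 :=
      (Complex.differentiable_one_div_Gamma.comp (differentiable_id.add_const 1)).analyticAt 0
    have hfa : AnalyticAt ℂ (fun s : ℂ => (s - 1/2)⁻¹) 0 :=
      (analyticAt_id.sub analyticAt_const).inv (by norm_num)
    have hfb : AnalyticAt ℂ (fun s : ℂ => (s + 1/2)⁻¹) 0 :=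
      (analyticAt_id.add analyticAt_const).inv (by norm_num)
    exact (h1.mul (((analyticAt_id.mul hmA).add
      (analyticAt_const.mul (analyticAt_id.mul hfa))).add
      (analyticAt_const.mul (analyticAt_id.mul hfb)))).neg
  refine ⟨hAn.congr hev.symm, ?_⟩
  rw [hev.deriv_eq]
  have hmd : HasDerivAt m (deriv m 0) 0 :=
    (mellin_diff hcont ha hC hasym 2 h02).hasDerivAt
  have hsm : HasDerivAt (fun s : ℂ => s * m s) (m 0) 0 := by
    have := (hasDerivAt_id (0:ℂ)).mul hmd
    exact this.congr_deriv (by simp)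
  have hinva : HasDerivAt (fun s : ℂ => (s - 1/2)⁻¹) (-4) 0 := by
    have h := ((hasDerivAt_id (0:ℂ)).sub_const (1/2)).inv (by norm_num)
    exact h.congr_deriv (by norm_num)
  have hinvb : HasDerivAt (fun s : ℂ => (s + 1/2)⁻¹) (-4) 0 := by
    have h := ((hasDerivAt_id (0:ℂ)).add_const (1/2)).inv (by norm_num)
    exact h.congr_deriv (by norm_num)
  have hfraca : HasDerivAt (fun s : ℂ => s * (s - 1/2)⁻¹) (-2) 0 := by
    have := (hasDerivAt_id (0:ℂ)).mul hinva
    exact this.congr_deriv (by norm_num)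
  have hfracb : HasDerivAt (fun s : ℂ => s * (s + 1/2)⁻¹) 2 0 := by
    have := (hasDerivAt_id (0:ℂ)).mul hinvb
    exact this.congr_deriv (by norm_num)
  have hG : HasDerivAt (fun s : ℂ =>
      s * m s + A 0 * (s * (s - 1/2)⁻¹) + A 1 * (s * (s + 1/2)⁻¹))
      (m 0 + A 0 * (-2) + A 1 * 2) 0 := by
    exact (hsm.add (hfraca.const_mul (A 0))).add (hfracb.const_mul (A 1))
  have hNde : HasDerivAt N (-(m 0) + 2 * A 0 - 2 * A 1) 0 := by
    have h := (hasDerivAt_invGamma.mul hG).neg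
    refine h.congr_deriv ?_
    simp [Complex.Gamma_one]
    ring
  rw [hNde.deriv, hm, mellin_FF2_zero hcont ha hC hasym (by norm_num)]
  have hc : ((1:ℂ) - ((1/2 : ℝ):ℂ))⁻¹ = 2 := by
    norm_num
  rw [hc]
  ring

end

end MellinZeta17


/-- Let `f : (0,∞) → ℂ` be continuous with asymptotic expansion
`f(t) ~ Σ_{j≥0} A_{−l+j} t^{−l+j}` as `t → 0⁺` (`l ∈ {0, 1/2}`) and exponential decay
at `∞`.  Then `ζ(s) = −(1/Γ(s)) ∫₀^∞ t^{s−1} f(t) dt` extends meromorphically with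
`s = 0` regular, and
`ζ'(0) = −∫₀¹ (f(t) − A₋ₗ t^{−l}) dt/t − ∫₁^∞ f(t) dt/t + C'`,
where `C' = A₀ Γ'(1)` if `l = 0` and `C' = 2 A₋₁⁄₂` if `l = 1/2`. -/
theorem mellin_zeta_regular_at_zero' 
    (f : ℝ → ℂ) (l : ℝ) (hl : l = 0 ∨ l = 1 / 2)
    (hcont : ContinuousOn f (Set.Ioi 0))
    (A : ℕ → ℂ)
    (hasym : ∀ J : ℕ,
      (fun t : ℝ => f t - ∑ j ∈ Finset.range J, A j * ((t ^ (-l + j) : ℝ) : ℂ))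
        =O[nhdsWithin 0 (Set.Ioi 0)] fun t : ℝ => t ^ (-l + J))
    (hdecay : ∃ C a : ℝ, 0 < a ∧ ∀ t : ℝ, 1 ≤ t → ‖f t‖ ≤ C * Real.exp (-a * t)) :
    ∃ ζ : ℂ → ℂ,
      (∀ s, MeromorphicAt ζ s) ∧
      AnalyticAt ℂ ζ 0 ∧
      (∀ s : ℂ, l < s.re →
        ζ s = -((Complex.Gamma s)⁻¹ * ∫ t in Set.Ioi (0 : ℝ), (t : ℂ) ^ (s - 1) * f t)) ∧
      deriv ζ 0
        = -(∫ t in Set.Ioc (0 : ℝ) 1, (f t - A 0 * ((t ^ (-l) : ℝ) : ℂ)) / (t : ℂ))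
          - (∫ t in Set.Ioi (1 : ℝ), f t / (t : ℂ))
          + (if l = 0 then A 0 * ((deriv Real.Gamma 1 : ℝ) : ℂ) else 2 * A 0) := by
  obtain ⟨C, a, ha, hC⟩ := hdecay
  have hl0 : 0 ≤ l := by rcases hl with rfl | rfl <;> norm_num
  refine ⟨MellinZeta17.zeta f l A,
    fun s => MellinZeta17.zeta_mero hcont ha hC hasym s, ?_,
    fun s hs => MellinZeta17.zeta_formula hcont ha hC hasym hl0 hs, ?_⟩
  · rcases hl with h | h
    · exact (MellinZeta17.zeta_case_zero hcont ha hC hasym h).1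
    · exact (MellinZeta17.zeta_case_half hcont ha hC hasym h).1
  · rcases hl with h | h
    · rw [if_pos h]
      exact (MellinZeta17.zeta_case_zero hcont ha hC hasym h).2
    · rw [if_neg (by rw [h]; norm_num)]
      exact (MellinZeta17.zeta_case_half hcont ha hC hasym h).2
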